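/- Let B_1,…,B_n be p×m complex matrices with F_0(z) = ∑_{j=1}^n z^{-j} B_j satisfying F_0(z) F_0(z)* = I_p for all z on the unit circle, and suppose n = ρκ for integers ρ, κ ≥ 1. For i = 1,…,κ let 𝐁_i be the p×ρm matrix obtained by placing B_{(i−1)ρ+1}, B_{(i−1)ρ+2}, …, B_{iρ} side by side (the a-th p×m block of 𝐁_i is B_{(i−1)ρ+a}). Then G(z) = ∑_{i=1}^{κ} z^{-i} 𝐁_i satisfies G(z) G(z)* = I_p for all z on the unit circle. -/

import Mathlib

open Matrix Finset

/-- Splitting a sum over `range (ρ * κ)` into a double sum. -/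
lemma aux_sum_range_mul {M : Type*} [AddCommMonoid M] (f : ℕ → M) (ρ κ : ℕ) :
    ∑ j ∈ Finset.range (ρ * κ), f j
      = ∑ i ∈ Finset.range κ, ∑ a ∈ Finset.range ρ, f (ρ * i + a) := by
  induction κ with
  | zero => simp
  | succ κ ih =>
    rw [Nat.mul_succ, Finset.sum_range_add, ih, Finset.sum_range_succ]

/-- Geometric sum of roots of unity. -/
lemma aux_root_sum (ρ : ℕ) (hρ : 1 ≤ ρ) (d : ℤ) :
    ∑ k ∈ Finset.range ρ, (Complex.exp (2 * Real.pi * Complex.I / ρ)) ^ ((k : ℤ) * d)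
      = if (ρ : ℤ) ∣ d then (ρ : ℂ) else 0 := by
  set ω : ℂ := Complex.exp (2 * Real.pi * Complex.I / ρ) with hω
  have hprim : IsPrimitiveRoot ω ρ := Complex.isPrimitiveRoot_exp ρ (by omega)
  have hrw : ∀ k : ℕ, ω ^ ((k : ℤ) * d) = (ω ^ d) ^ k := by
    intro k
    rw [mul_comm, _root_.zpow_mul, zpow_natCast]
  simp only [hrw]
  by_cases hdvd : (ρ : ℤ) ∣ d
  · have h1 : ω ^ d = 1 := (hprim.zpow_eq_one_iff_dvd d).2 hdvd
    simp [h1, hdvd]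
  · have h1 : ω ^ d ≠ 1 := fun h => hdvd ((hprim.zpow_eq_one_iff_dvd d).1 h)
    have h2 : (ω ^ d) ^ ρ = 1 := by
      rw [← zpow_natCast (ω ^ d) ρ, ← _root_.zpow_mul, mul_comm, _root_.zpow_mul,
        hprim.zpow_eq_one, _root_.one_zpow]
    rw [geom_sum_eq h1, h2, if_neg hdvd]
    simp

/-- Expansion of the co-isometry product on the circle. -/
lemma aux_expand {p' : ℕ} {q : Type*} [Fintype q] (N : ℕ)
    (C : ℕ → Matrix (Fin p') q ℂ) (u : ℂ) (hu : ‖u‖ = 1) :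
    (∑ j ∈ Finset.range N, u ^ (-(j + 1 : ℤ)) • C j) *
      (∑ j ∈ Finset.range N, u ^ (-(j + 1 : ℤ)) • C j)ᴴ
    = ∑ j ∈ Finset.range N, ∑ j' ∈ Finset.range N,
        u ^ ((j' : ℤ) - (j : ℤ)) • (C j * (C j')ᴴ) := by
  have hu0 : u ≠ 0 := by
    intro h; rw [h] at hu; simp at hu
  have hstar : (starRingEnd ℂ) u = u⁻¹ := by
    have h1 : u * (starRingEnd ℂ) u = 1 := by
      rw [Complex.mul_conj]
      norm_cast
      rw [Complex.normSq_eq_norm_sq]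
      simp only [hu, one_pow]
    exact eq_inv_of_mul_eq_one_right h1
  rw [Matrix.sum_mul]
  refine Finset.sum_congr rfl fun j _ => ?_
  rw [conjTranspose_sum, Matrix.mul_sum]
  refine Finset.sum_congr rfl fun j' _ => ?_
  rw [conjTranspose_smul, Matrix.smul_mul, Matrix.mul_smul, smul_smul]
  congr 1
  rw [Complex.star_def, map_zpow₀, hstar, _root_.inv_zpow', neg_neg, ← zpow_add₀ hu0]
  congr 1
  ring

theorem fir_coisometry_side_by_side
    (p m n ρ κ : ℕ) (hρ : 1 ≤ ρ) (hκ : 1 ≤ κ) (hn : n = ρ * κ)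
    (B : ℕ → Matrix (Fin p) (Fin m) ℂ)
    (hcoiso : ∀ z : ℂ, ‖z‖ = 1 →
      (∑ j ∈ Finset.range n, z ^ (-(j + 1 : ℤ)) • B (j + 1)) *
        (∑ j ∈ Finset.range n, z ^ (-(j + 1 : ℤ)) • B (j + 1))ᴴ = 1) :
    ∀ z : ℂ, ‖z‖ = 1 →
      (∑ i ∈ Finset.range κ, z ^ (-(i + 1 : ℤ)) •
          Matrix.of (fun (x : Fin p) (r : Fin ρ × Fin m) =>
            B (ρ * i + r.1.val + 1) x r.2)) *
        (∑ i ∈ Finset.range κ, z ^ (-(i + 1 : ℤ)) •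
          Matrix.of (fun (x : Fin p) (r : Fin ρ × Fin m) =>
            B (ρ * i + r.1.val + 1) x r.2))ᴴ = 1 := by
  intro z hz
  subst hn
  have hz0 : z ≠ 0 := by intro h; rw [h] at hz; simp at hz
  have hρ0 : (ρ : ℂ) ≠ 0 := Nat.cast_ne_zero.mpr (by omega)
  obtain ⟨w, hw⟩ := IsAlgClosed.exists_pow_nat_eq z (by omega : 0 < ρ)
  have hwnorm : ‖w‖ = 1 := by
    have h1 : ‖w‖ ^ ρ = 1 := by rw [← norm_pow, hw, hz]
    rcases pow_eq_one_iff_cases.mp h1 with h | h | h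
    · omega
    · exact h
    · nlinarith [norm_nonneg w, h.1]
  set ω : ℂ := Complex.exp (2 * Real.pi * Complex.I / ρ) with hωdef
  have hωnorm : ‖ω‖ = 1 := by
    rw [hωdef, Complex.norm_exp]
    have h0 : (2 * (Real.pi : ℂ) * Complex.I / ρ).re = 0 := by
      simp [Complex.div_re]
    rw [h0, Real.exp_zero]
  have hunorm : ∀ k : ℕ, ‖w * ω ^ k‖ = 1 := by
    intro k
    rw [norm_mul, norm_pow, hwnorm, hωnorm, one_pow, one_mul]
  set C : ℕ → ℕ → Matrix (Fin p) (Fin p) ℂ :=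
    fun j j' => B (j + 1) * (B (j' + 1))ᴴ with hC
  set c : ℕ → ℕ → ℂ := fun j j' =>
    w ^ ((j' : ℤ) - (j : ℤ)) *
      (if (ρ : ℤ) ∣ ((j' : ℤ) - (j : ℤ)) then (ρ : ℂ) else 0) with hc
  -- block product identity
  have hblock : ∀ i i' : ℕ,
      (Matrix.of (fun (x : Fin p) (r : Fin ρ × Fin m) => B (ρ * i + r.1.val + 1) x r.2)) *
        (Matrix.of (fun (x : Fin p) (r : Fin ρ × Fin m) => B (ρ * i' + r.1.val + 1) x r.2))ᴴ
      = ∑ a ∈ Finset.range ρ, C (ρ * i + a) (ρ * i' + a) := by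
    intro i i'
    ext x y
    rw [Matrix.mul_apply, Fintype.sum_prod_type, Matrix.sum_apply,
      ← Fin.sum_univ_eq_sum_range (fun a => C (ρ * i + a) (ρ * i' + a) x y) ρ]
    refine Finset.sum_congr rfl fun a _ => ?_
    rw [hC]
    simp [Matrix.mul_apply]
  -- expansion of the goal's product
  have hgoal :
      (∑ i ∈ Finset.range κ, z ^ (-(i + 1 : ℤ)) •
          Matrix.of (fun (x : Fin p) (r : Fin ρ × Fin m) =>
            B (ρ * i + r.1.val + 1) x r.2)) *
        (∑ i ∈ Finset.range κ, z ^ (-(i + 1 : ℤ)) •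
          Matrix.of (fun (x : Fin p) (r : Fin ρ × Fin m) =>
            B (ρ * i + r.1.val + 1) x r.2))ᴴ
      = ∑ i ∈ Finset.range κ, ∑ i' ∈ Finset.range κ,
          z ^ ((i' : ℤ) - (i : ℤ)) • ∑ a ∈ Finset.range ρ, C (ρ * i + a) (ρ * i' + a) := by
    rw [aux_expand κ (fun i => Matrix.of (fun (x : Fin p) (r : Fin ρ × Fin m) =>
      B (ρ * i + r.1.val + 1) x r.2)) z hz]
    exact Finset.sum_congr rfl fun i _ => Finset.sum_congr rfl fun i' _ => by rw [hblock]
  -- the coisometry hypothesis summed over the roots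
  have hsum : ∑ k ∈ Finset.range ρ,
      ((∑ j ∈ Finset.range (ρ * κ), (w * ω ^ k) ^ (-(j + 1 : ℤ)) • B (j + 1)) *
        (∑ j ∈ Finset.range (ρ * κ), (w * ω ^ k) ^ (-(j + 1 : ℤ)) • B (j + 1))ᴴ)
      = (ρ : ℂ) • (1 : Matrix (Fin p) (Fin p) ℂ) := by
    rw [Finset.sum_congr rfl fun k _ => hcoiso (w * ω ^ k) (hunorm k)]
    simp [Finset.sum_const, ← Nat.cast_smul_eq_nsmul ℂ]
  -- evaluating the root-of-unity coefficient sums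
  have hcoeff : ∀ j j' : ℕ,
      ∑ k ∈ Finset.range ρ, (w * ω ^ k) ^ ((j' : ℤ) - (j : ℤ)) = c j j' := by
    intro j j'
    rw [hc]
    simp only []
    rw [← aux_root_sum ρ hρ ((j' : ℤ) - (j : ℤ)), Finset.mul_sum]
    refine Finset.sum_congr rfl fun k _ => ?_
    rw [mul_zpow, ← zpow_natCast ω k, ← _root_.zpow_mul]
  -- expansion of the summed coisometries
  have hsum' : ∑ k ∈ Finset.range ρ,
      ((∑ j ∈ Finset.range (ρ * κ), (w * ω ^ k) ^ (-(j + 1 : ℤ)) • B (j + 1)) *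
        (∑ j ∈ Finset.range (ρ * κ), (w * ω ^ k) ^ (-(j + 1 : ℤ)) • B (j + 1))ᴴ)
      = ∑ j ∈ Finset.range (ρ * κ), ∑ j' ∈ Finset.range (ρ * κ), c j j' • C j j' :=
    calc ∑ k ∈ Finset.range ρ,
        ((∑ j ∈ Finset.range (ρ * κ), (w * ω ^ k) ^ (-(j + 1 : ℤ)) • B (j + 1)) *
          (∑ j ∈ Finset.range (ρ * κ), (w * ω ^ k) ^ (-(j + 1 : ℤ)) • B (j + 1))ᴴ)
        = ∑ k ∈ Finset.range ρ, ∑ j ∈ Finset.range (ρ * κ), ∑ j' ∈ Finset.range (ρ * κ),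
            (w * ω ^ k) ^ ((j' : ℤ) - (j : ℤ)) • C j j' :=
          Finset.sum_congr rfl fun k _ =>
            aux_expand (ρ * κ) (fun j => B (j + 1)) (w * ω ^ k) (hunorm k)
      _ = ∑ j ∈ Finset.range (ρ * κ), ∑ k ∈ Finset.range ρ, ∑ j' ∈ Finset.range (ρ * κ),
            (w * ω ^ k) ^ ((j' : ℤ) - (j : ℤ)) • C j j' := Finset.sum_comm
      _ = ∑ j ∈ Finset.range (ρ * κ), ∑ j' ∈ Finset.range (ρ * κ), ∑ k ∈ Finset.range ρ,
            (w * ω ^ k) ^ ((j' : ℤ) - (j : ℤ)) • C j j' :=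
          Finset.sum_congr rfl fun j _ => Finset.sum_comm
      _ = ∑ j ∈ Finset.range (ρ * κ), ∑ j' ∈ Finset.range (ρ * κ),
            (∑ k ∈ Finset.range ρ, (w * ω ^ k) ^ ((j' : ℤ) - (j : ℤ))) • C j j' :=
          Finset.sum_congr rfl fun j _ => Finset.sum_congr rfl fun j' _ =>
            Finset.sum_smul.symm
      _ = ∑ j ∈ Finset.range (ρ * κ), ∑ j' ∈ Finset.range (ρ * κ), c j j' • C j j' :=
          Finset.sum_congr rfl fun j _ => Finset.sum_congr rfl fun j' _ => by
            rw [hcoeff j j']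
  -- collapsing the a' sum
  have hcollapse : ∀ i ∈ Finset.range κ, ∀ i' ∈ Finset.range κ, ∀ a ∈ Finset.range ρ,
      ∑ a' ∈ Finset.range ρ, c (ρ * i + a) (ρ * i' + a') • C (ρ * i + a) (ρ * i' + a')
        = ((ρ : ℂ) * z ^ ((i' : ℤ) - (i : ℤ))) • C (ρ * i + a) (ρ * i' + a) := by
    intro i _ i' _ a ha
    rw [Finset.sum_eq_single a]
    · have hdvd : (ρ : ℤ) ∣ (((ρ * i' + a : ℕ) : ℤ) - ((ρ * i + a : ℕ) : ℤ)) := by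
        push_cast
        exact ⟨(i' : ℤ) - (i : ℤ), by ring⟩
      rw [hc]
      simp only []
      rw [if_pos hdvd]
      congr 1
      have hexp2 : (((ρ * i' + a : ℕ) : ℤ) - ((ρ * i + a : ℕ) : ℤ))
          = (ρ : ℤ) * ((i' : ℤ) - (i : ℤ)) := by push_cast; ring
      rw [hexp2, _root_.zpow_mul, zpow_natCast, hw]
      ring
    · intro a' ha' hne
      have hnd : ¬ (ρ : ℤ) ∣ (((ρ * i' + a' : ℕ) : ℤ) - ((ρ * i + a : ℕ) : ℤ)) := by
        intro hd
        have hd2 : (ρ : ℤ) ∣ ((a' : ℤ) - (a : ℤ)) := by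
          have he : (((ρ * i' + a' : ℕ) : ℤ) - ((ρ * i + a : ℕ) : ℤ))
              = (ρ : ℤ) * ((i' : ℤ) - (i : ℤ)) + ((a' : ℤ) - (a : ℤ)) := by push_cast; ring
          rw [he] at hd
          exact (dvd_add_right ⟨(i' : ℤ) - (i : ℤ), rfl⟩).mp hd
        have haρ : a < ρ := Finset.mem_range.mp ha
        have ha'ρ : a' < ρ := Finset.mem_range.mp ha'
        have hz2 : (a' : ℤ) - (a : ℤ) = 0 := by
          refine Int.eq_zero_of_abs_lt_dvd hd2 ?_
          rw [abs_sub_lt_iff]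
          omega
        exact hne (by exact_mod_cast sub_eq_zero.mp hz2)
      rw [hc]
      simp only []
      rw [if_neg hnd, mul_zero, zero_smul]
    · intro h
      exact absurd ha h
  -- reindexing the double sum
  have hre : ∑ j ∈ Finset.range (ρ * κ), ∑ j' ∈ Finset.range (ρ * κ), c j j' • C j j'
      = ∑ i ∈ Finset.range κ, ∑ i' ∈ Finset.range κ,
          ((ρ : ℂ) * z ^ ((i' : ℤ) - (i : ℤ))) •
            ∑ a ∈ Finset.range ρ, C (ρ * i + a) (ρ * i' + a) := by
    refine (aux_sum_range_mul _ ρ κ).trans ?_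
    refine Finset.sum_congr rfl fun i hi => ?_
    calc ∑ a ∈ Finset.range ρ, ∑ j' ∈ Finset.range (ρ * κ),
          c (ρ * i + a) j' • C (ρ * i + a) j'
        = ∑ a ∈ Finset.range ρ, ∑ i' ∈ Finset.range κ, ∑ a' ∈ Finset.range ρ,
            c (ρ * i + a) (ρ * i' + a') • C (ρ * i + a) (ρ * i' + a') :=
          Finset.sum_congr rfl fun a _ => aux_sum_range_mul _ ρ κ
      _ = ∑ i' ∈ Finset.range κ, ∑ a ∈ Finset.range ρ, ∑ a' ∈ Finset.range ρ,
            c (ρ * i + a) (ρ * i' + a') • C (ρ * i + a) (ρ * i' + a') := Finset.sum_comm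
      _ = ∑ i' ∈ Finset.range κ, ((ρ : ℂ) * z ^ ((i' : ℤ) - (i : ℤ))) •
            ∑ a ∈ Finset.range ρ, C (ρ * i + a) (ρ * i' + a) := by
          refine Finset.sum_congr rfl fun i' hi' => ?_
          rw [Finset.smul_sum]
          exact Finset.sum_congr rfl fun a ha => hcollapse i hi i' hi' a ha
  -- put everything together
  refine smul_right_injective (Matrix (Fin p) (Fin p) ℂ) hρ0 ?_
  show (ρ : ℂ) • _ = (ρ : ℂ) • (1 : Matrix (Fin p) (Fin p) ℂ)
  rw [hgoal, ← hsum, hsum', hre, Finset.smul_sum]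
  refine Finset.sum_congr rfl fun i _ => ?_
  rw [Finset.smul_sum]
  refine Finset.sum_congr rfl fun i' _ => ?_
  rw [smul_smul]
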